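/- arXiv:2304.01787 — 2 statements merged into one kernel-verified Lean document; each statement's English description precedes it below -/
import Mathlib

section
/- Let G be a finite abelian group and let k, r be integers with 2 ≤ k and 2k ≤ r. For X drawn from the planted distribution D1 on G^r, the number of k-SUM solutions satisfies Var(c(X)) < (C(r,k)/|G|)·(1 + 2^k·k²/r). -/
open Finset

/-- Number of k-SUM solutions of an instance `X ∈ G^r`: the number of `k`-element
subsets `S ⊆ {1,…,r}` with `∑_{i∈S} X i = 0`. -/
def numSol {G : Type} [AddCommGroup G] [DecidableEq G] (k : ℕ) {r : ℕ} (X : Fin r → G) : ℕ :=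
  (((univ : Finset (Fin r)).powersetCard k).filter (fun S => ∑ i ∈ S, X i = 0)).card

/-- Plant a solution at `S`: replace the entry at the smallest index `i` of `S` by
`-∑_{j∈S, j≠i} Y j`. -/
def plant {G : Type} [AddCommGroup G] {r : ℕ} (Y : Fin r → G) (S : Finset (Fin r)) :
    Fin r → G :=
  fun j =>
    if hS : S.Nonempty then
      if j = S.min' hS then -∑ i ∈ S.erase (S.min' hS), Y i else Y j
    else Y j

/-- The probability mass function of the planted distribution `D1` on `G^r`:
draw `Y` uniformly from `G^r` and an independent uniformly random `k`-element
subset `S`, and output `plant Y S`. -/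
noncomputable def D1pmf {G : Type} [AddCommGroup G] [Fintype G] [DecidableEq G] (k : ℕ)
    {r : ℕ} (X : Fin r → G) : ℝ :=
  (((univ : Finset ((Fin r → G) × Finset (Fin r))).filter
      (fun p => p.2.card = k ∧ plant p.1 p.2 = X)).card : ℝ)
    / ((Fintype.card G : ℝ) ^ r * (r.choose k : ℝ))

/-- Expectation of the number of k-SUM solutions under the planted distribution `D1`. -/
noncomputable def expD1 (G : Type) [AddCommGroup G] [Fintype G] [DecidableEq G]
    (k r : ℕ) : ℝ :=
  ∑ X : Fin r → G, D1pmf k X * (numSol k X : ℝ)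

/-- Variance of the number of k-SUM solutions under the planted distribution `D1`. -/
noncomputable def varD1 (G : Type) [AddCommGroup G] [Fintype G] [DecidableEq G]
    (k r : ℕ) : ℝ :=
  ∑ X : Fin r → G, D1pmf k X * ((numSol k X : ℝ) - expD1 G k r) ^ 2

set_option linter.unusedSectionVars false

section Lemmas

variable {G : Type} [AddCommGroup G] [Fintype G] [DecidableEq G] {r : ℕ}

lemma sum_plant_self (Y : Fin r → G) (S : Finset (Fin r)) (hS : S.Nonempty) :
    ∑ i ∈ S, plant Y S i = 0 := by
  classical
  have hm : S.min' hS ∈ S := S.min'_mem hS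
  rw [← Finset.add_sum_erase _ _ hm]
  have h1 : plant Y S (S.min' hS) = -∑ i ∈ S.erase (S.min' hS), Y i := by
    simp [plant, hS]
  have h2 : ∑ i ∈ S.erase (S.min' hS), plant Y S i = ∑ i ∈ S.erase (S.min' hS), Y i := by
    apply Finset.sum_congr rfl
    intro i hi
    have : i ≠ S.min' hS := Finset.ne_of_mem_erase hi
    simp [plant, hS, this]
  rw [h1, h2, neg_add_cancel]

lemma plant_update_of_not_mem (Y : Fin r → G) (S : Finset (Fin r)) {j : Fin r} (hj : j ∉ S)
    (a : G) : plant (Function.update Y j a) S = Function.update (plant Y S) j a := by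
  classical
  funext i
  by_cases hS : S.Nonempty
  · by_cases hi : i = S.min' hS
    · have hij : i ≠ j := by rintro rfl; exact hj (hi ▸ S.min'_mem hS)
      have : ∑ x ∈ S.erase (S.min' hS), Function.update Y j a x
          = ∑ x ∈ S.erase (S.min' hS), Y x := by
        apply Finset.sum_congr rfl
        intro x hx
        have : x ≠ j := by rintro rfl; exact hj (Finset.mem_of_mem_erase hx)
        simp [Function.update_of_ne this]
      simp [plant, hS, hi, Function.update_of_ne (hi ▸ hij : S.min' hS ≠ j), this]
    · by_cases hij : i = j
      · subst hij
        simp [plant, hS, hi]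
      · simp [plant, hS, hi, Function.update_of_ne hij]
  · by_cases hij : i = j
    · subst hij; simp [plant, hS]
    · simp [plant, hS, Function.update_of_ne hij]

end Lemmas

section Count
variable {G : Type} [AddCommGroup G] [Fintype G] [DecidableEq G]
variable {ι : Type} [Fintype ι] [DecidableEq ι]

lemma splitAt_symm_eq (j : ι) (a : G) (y : { i // i ≠ j } → G) (b : G) :
    (Equiv.funSplitAt j G).symm (a, y)
      = Function.update ((Equiv.funSplitAt j G).symm (b, y)) j a := by
  funext i
  by_cases hi : i = j
  · subst hi; simp [Equiv.funSplitAt, Equiv.piSplitAt]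
  · simp [Equiv.funSplitAt, Equiv.piSplitAt, hi, Function.update_of_ne hi]

lemma sum_ite_add_eq (c : G) : (∑ a : G, if a + c = 0 then (1:ℕ) else 0) = 1 := by
  have : ∀ a : G, (a + c = 0) = (a = -c) := by
    intro a
    simp [add_eq_zero_iff_eq_neg]
  simp_rw [this]
  rw [Finset.sum_ite_eq' univ (-c) (fun _ => (1:ℕ))]
  simp

lemma count_one (j : ι) (g : (ι → G) → G)
    (hg : ∀ Y a, g (Function.update Y j a) = g Y) :
    (univ.filter fun Y : ι → G => Y j + g Y = 0).card
      = Fintype.card G ^ (Fintype.card ι - 1) := by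
  classical
  rw [Finset.card_filter]
  rw [← Equiv.sum_comp (Equiv.funSplitAt j G).symm
      (fun Y => if Y j + g Y = 0 then (1:ℕ) else 0)]
  rw [Fintype.sum_prod_type_right]
  have key : ∀ (y : { i // i ≠ j } → G) (a : G),
      ((Equiv.funSplitAt j G).symm (a, y)) j = a ∧
      g ((Equiv.funSplitAt j G).symm (a, y)) = g ((Equiv.funSplitAt j G).symm (0, y)) := by
    intro y a
    constructor
    · simp [Equiv.funSplitAt, Equiv.piSplitAt]
    · rw [splitAt_symm_eq j a y 0, hg]
  have : ∀ y : { i // i ≠ j } → G,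
      (∑ a : G, if ((Equiv.funSplitAt j G).symm (a, y)) j
          + g ((Equiv.funSplitAt j G).symm (a, y)) = 0 then (1:ℕ) else 0) = 1 := by
    intro y
    have := fun a => key y a
    calc (∑ a : G, if ((Equiv.funSplitAt j G).symm (a, y)) j
          + g ((Equiv.funSplitAt j G).symm (a, y)) = 0 then (1:ℕ) else 0)
        = ∑ a : G, if a + g ((Equiv.funSplitAt j G).symm (0, y)) = 0 then (1:ℕ) else 0 := by
          apply Finset.sum_congr rfl; intro a _
          rw [(this a).1, (this a).2]
      _ = 1 := sum_ite_add_eq _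
  rw [Finset.sum_congr rfl (fun y _ => this y)]
  simp only [Finset.sum_const, Finset.card_univ, smul_eq_mul, mul_one]
  rw [Fintype.card_fun]
  congr 1
  rw [Fintype.card_subtype_compl, Fintype.card_subtype_eq]
end Count

section Count2
variable {G : Type} [AddCommGroup G] [Fintype G] [DecidableEq G]
variable {ι : Type} [Fintype ι] [DecidableEq ι]

lemma count_two (j j' : ι) (hjj : j' ≠ j) (g h : (ι → G) → G)
    (hg : ∀ Y a, g (Function.update Y j a) = g Y)
    (hh : ∀ Y a, h (Function.update Y j a) = h Y)
    (hh' : ∀ Y a, h (Function.update Y j' a) = h Y) :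
    (univ.filter fun Y : ι → G => Y j + g Y = 0 ∧ Y j' + h Y = 0).card
      = Fintype.card G ^ (Fintype.card ι - 2) := by
  classical
  set e := (Equiv.funSplitAt j G) with he
  rw [Finset.card_filter]
  rw [← Equiv.sum_comp e.symm
      (fun Y => if (Y j + g Y = 0 ∧ Y j' + h Y = 0) then (1:ℕ) else 0)]
  rw [Fintype.sum_prod_type_right]
  have symm_j : ∀ (a : G) (y : { i // i ≠ j } → G), (e.symm (a, y)) j = a := by
    intro a y; simp [he, Equiv.funSplitAt, Equiv.piSplitAt]
  have symm_ne : ∀ (a : G) (y : { i // i ≠ j } → G) (i : ι) (hi : i ≠ j),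
      (e.symm (a, y)) i = y ⟨i, hi⟩ := by
    intro a y i hi; simp [he, Equiv.funSplitAt, Equiv.piSplitAt, hi]
  have hsum : ∀ y : { i // i ≠ j } → G,
      (∑ a : G, if ((e.symm (a, y)) j + g (e.symm (a, y)) = 0 ∧
          (e.symm (a, y)) j' + h (e.symm (a, y)) = 0) then (1:ℕ) else 0)
      = (if (y ⟨j', hjj⟩ + h (e.symm (0, y)) = 0) then (1:ℕ) else 0) := by
    intro y
    have hcond : ∀ a : G, (((e.symm (a, y)) j + g (e.symm (a, y)) = 0 ∧
          (e.symm (a, y)) j' + h (e.symm (a, y)) = 0))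
        = ((a + g (e.symm (0, y)) = 0) ∧ (y ⟨j', hjj⟩ + h (e.symm (0, y)) = 0)) := by
      intro a
      have h1 : g (e.symm (a, y)) = g (e.symm (0, y)) := by
        rw [splitAt_symm_eq j a y 0, hg]
      have h2 : h (e.symm (a, y)) = h (e.symm (0, y)) := by
        rw [splitAt_symm_eq j a y 0, hh]
      rw [symm_j, symm_ne a y j' hjj, h1, h2]
    simp_rw [hcond]
    by_cases hc : (y ⟨j', hjj⟩ + h (e.symm (0, y)) = 0)
    · simp only [hc, and_true, if_true]
      exact sum_ite_add_eq _
    · simp [hc]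
  rw [Finset.sum_congr rfl (fun y _ => hsum y)]
  -- now apply count_one on the subtype
  have hinv : ∀ (y : { i // i ≠ j } → G) (a : G),
      h (e.symm (0, Function.update y ⟨j', hjj⟩ a)) = h (e.symm (0, y)) := by
    intro y a
    have : e.symm (0, Function.update y ⟨j', hjj⟩ a)
        = Function.update (e.symm (0, y)) j' a := by
      funext i
      by_cases hi : i = j
      · subst hi
        rw [symm_j, Function.update_of_ne (Ne.symm hjj), symm_j]
      · by_cases hij' : i = j'
        · subst hij'
          rw [symm_ne _ _ i hi]
          simp
        · have hne2 : (⟨i, hi⟩ : { i // i ≠ j }) ≠ ⟨j', hjj⟩ := by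
            simp [Subtype.ext_iff, hij']
          rw [symm_ne _ _ i hi, Function.update_of_ne hne2,
            Function.update_of_ne hij', symm_ne 0 y i hi]
    rw [this, hh']
  have := count_one (G := G) (ι := { i // i ≠ j }) ⟨j', hjj⟩
      (fun y => h (e.symm (0, y))) hinv
  rw [Finset.card_filter] at this
  rw [this]
  have hcard : Fintype.card { i // i ≠ j } = Fintype.card ι - 1 := by
    rw [Fintype.card_subtype_compl, Fintype.card_subtype_eq]
  rw [hcard]
  congr 1
end Count2

section Sigma
variable {G : Type} [AddCommGroup G] [Fintype G] [DecidableEq G] {r : ℕ}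

lemma plant_apply_of_not_mem (Y : Fin r → G) {S : Finset (Fin r)} {j : Fin r} (hj : j ∉ S) :
    plant Y S j = Y j := by
  unfold plant
  by_cases hS : S.Nonempty
  · have : j ≠ S.min' hS := by rintro rfl; exact hj (S.min'_mem hS)
    simp [hS, this]
  · simp [hS]

lemma sum_plant_erase_update (Y : Fin r → G) (S T : Finset (Fin r)) {j : Fin r}
    (hjS : j ∉ S) (a : G) (V : Finset (Fin r)) (hjV : j ∉ V) :
    ∑ i ∈ V, plant (Function.update Y j a) S i = ∑ i ∈ V, plant Y S i := by
  rw [plant_update_of_not_mem Y S hjS a, Finset.sum_update_of_notMem hjV]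

lemma sigma_eq (Y : Fin r → G) (S T : Finset (Fin r)) {j : Fin r} (hjT : j ∈ T)
    (hjS : j ∉ S) :
    ∑ i ∈ T, plant Y S i = Y j + ∑ i ∈ T.erase j, plant Y S i := by
  rw [← Finset.add_sum_erase _ _ hjT, plant_apply_of_not_mem Y hjS]

lemma count_sigma_one (S T : Finset (Fin r)) {j : Fin r} (hjT : j ∈ T) (hjS : j ∉ S) :
    (univ.filter fun Y : Fin r → G => ∑ i ∈ T, plant Y S i = 0).card
      = Fintype.card G ^ (r - 1) := by
  have hfe : (univ.filter fun Y : Fin r → G => ∑ i ∈ T, plant Y S i = 0)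
      = (univ.filter fun Y : Fin r → G =>
          Y j + (∑ i ∈ T.erase j, plant Y S i) = 0) := by
    apply Finset.filter_congr
    intro Y _
    rw [sigma_eq Y S T hjT hjS]
  rw [hfe, count_one j (fun Y => ∑ i ∈ T.erase j, plant Y S i)
      (fun Y a => sum_plant_erase_update Y S T hjS a _ (Finset.notMem_erase j T))]
  simp

lemma count_sigma_two (S T U : Finset (Fin r)) {j j' : Fin r} (hjT : j ∈ T) (hjS : j ∉ S)
    (hjU : j ∉ U) (hj'U : j' ∈ U) (hj'S : j' ∉ S) (hne : j' ≠ j) :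
    (univ.filter fun Y : Fin r → G =>
        (∑ i ∈ T, plant Y S i = 0) ∧ (∑ i ∈ U, plant Y S i = 0)).card
      = Fintype.card G ^ (r - 2) := by
  have hfe : (univ.filter fun Y : Fin r → G =>
        (∑ i ∈ T, plant Y S i = 0) ∧ (∑ i ∈ U, plant Y S i = 0))
      = (univ.filter fun Y : Fin r → G =>
          (Y j + (∑ i ∈ T.erase j, plant Y S i) = 0) ∧
          (Y j' + (∑ i ∈ U.erase j', plant Y S i) = 0)) := by
    apply Finset.filter_congr
    intro Y _
    rw [sigma_eq Y S T hjT hjS, sigma_eq Y S U hj'U hj'S]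
  rw [hfe, count_two j j' hne (fun Y => ∑ i ∈ T.erase j, plant Y S i)
      (fun Y => ∑ i ∈ U.erase j', plant Y S i)
      (fun Y a => sum_plant_erase_update Y S T hjS a _ (Finset.notMem_erase j T))
      (fun Y a => sum_plant_erase_update Y S U hjS a _
        (fun hmem => hjU (Finset.mem_of_mem_erase hmem)))
      (fun Y a => sum_plant_erase_update Y S U hj'S a _ (Finset.notMem_erase j' U))]
  simp
end Sigma


section Moments
variable {G : Type} [AddCommGroup G] [Fintype G] [DecidableEq G] {r k : ℕ}

lemma exists_mem_not_mem {T S : Finset (Fin r)} (hcard : S.card ≤ T.card) (hne : T ≠ S) :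
    ∃ j, j ∈ T ∧ j ∉ S := by
  by_contra h
  push_neg at h
  have hsub : T ⊆ S := fun x hx => h x hx
  exact hne (Finset.eq_of_subset_of_card_le hsub hcard)

lemma numSol_eq_sum (X : Fin r → G) :
    numSol k X = ∑ T ∈ (univ : Finset (Fin r)).powersetCard k,
      (if ∑ i ∈ T, X i = 0 then 1 else 0) := by
  rw [numSol, Finset.card_filter]

lemma sum_numSol_plant (S : Finset (Fin r)) (hSk : S.card = k) (hk : 1 ≤ k) :
    ∑ Y : Fin r → G, numSol k (plant Y S)
      = Fintype.card G ^ r + (r.choose k - 1) * Fintype.card G ^ (r - 1) := by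
  classical
  have hSne : S.Nonempty := Finset.card_pos.mp (by omega)
  have hSK : S ∈ (univ : Finset (Fin r)).powersetCard k := by
    simp [Finset.mem_powersetCard, hSk]
  simp_rw [numSol_eq_sum]
  rw [Finset.sum_comm]
  have hterm : ∀ T ∈ (univ : Finset (Fin r)).powersetCard k,
      (∑ Y : Fin r → G, if ∑ i ∈ T, plant Y S i = 0 then 1 else 0)
      = if T = S then Fintype.card G ^ r else Fintype.card G ^ (r - 1) := by
    intro T hT
    by_cases hTS : T = S
    · subst hTS
      simp only [if_pos rfl]
      rw [Finset.sum_congr rfl (fun Y _ => by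
        rw [if_pos (sum_plant_self Y T hSne)])]
      simp [Finset.card_univ]
    · rw [if_neg hTS]
      have hTk : T.card = k := (Finset.mem_powersetCard.mp hT).2
      obtain ⟨j, hjT, hjS⟩ := exists_mem_not_mem (by omega) hTS
      rw [← count_sigma_one S T hjT hjS, Finset.card_filter]
  rw [Finset.sum_congr rfl hterm]
  rw [← Finset.add_sum_erase _ _ hSK, if_pos rfl]
  congr 1
  rw [Finset.sum_congr rfl (fun T hT => if_neg (Finset.ne_of_mem_erase hT))]
  rw [Finset.sum_const, Finset.card_erase_of_mem hSK, Finset.card_powersetCard,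
    Finset.card_univ, Fintype.card_fin, smul_eq_mul]
end Moments

section SecondMoment
variable {G : Type} [AddCommGroup G] [Fintype G] [DecidableEq G] {r k : ℕ}

/-- the set of "bad" pairs for a given `S` -/
def badSet (k : ℕ) {r : ℕ} (S : Finset (Fin r)) : Finset (Finset (Fin r) × Finset (Fin r)) :=
  ((((univ : Finset (Fin r)).powersetCard k).erase S) ×ˢ
      (((univ : Finset (Fin r)).powersetCard k).erase S)).filter
    (fun p => p.1 ≠ p.2 ∧ p.1 ⊆ S ∪ p.2 ∧ p.2 ⊆ S ∪ p.1)

lemma my_boole_mul {P Q : Prop} [Decidable P] [Decidable Q] :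
    (if P then (1:ℕ) else 0) * (if Q then (1:ℕ) else 0) = if P ∧ Q then 1 else 0 := by
  by_cases hP : P <;> by_cases hQ : Q <;> simp [hP, hQ]

lemma sum_numSol_sq_le (S : Finset (Fin r)) (hSk : S.card = k) (hk : 1 ≤ k) :
    ∑ Y : Fin r → G, (numSol k (plant Y S))^2
      ≤ Fintype.card G ^ r
        + (3 * (r.choose k - 1) + (badSet k S).card) * Fintype.card G ^ (r - 1)
        + (r.choose k - 1)^2 * Fintype.card G ^ (r - 2) := by
  classical
  set K := (univ : Finset (Fin r)).powersetCard k with hK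
  have hSne : S.Nonempty := Finset.card_pos.mp (by omega)
  have hSK : S ∈ K := by simp [hK, Finset.mem_powersetCard, hSk]
  have hKcard : K.card = r.choose k := by
    rw [hK, Finset.card_powersetCard, Finset.card_univ, Fintype.card_fin]
  have hNe : (K.erase S).card = r.choose k - 1 := by
    rw [Finset.card_erase_of_mem hSK, hKcard]
  -- expand the square
  have expand : ∀ X : Fin r → G, (numSol k X)^2
      = ∑ p ∈ K ×ˢ K, (if (∑ i ∈ p.1, X i = 0) ∧ (∑ i ∈ p.2, X i = 0) then 1 else 0) := by
    intro X
    rw [sq, numSol_eq_sum, Finset.sum_mul_sum, Finset.sum_product]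
    exact Finset.sum_congr rfl (fun T _ => Finset.sum_congr rfl (fun U _ => my_boole_mul))
  simp_rw [expand]
  rw [Finset.sum_comm]
  -- the count for each pair
  set n : Finset (Fin r) × Finset (Fin r) → ℕ := fun p =>
    (univ.filter fun Y : Fin r → G =>
      (∑ i ∈ p.1, plant Y S i = 0) ∧ (∑ i ∈ p.2, plant Y S i = 0)).card with hn
  have hsum_eq : (∑ p ∈ K ×ˢ K, ∑ Y : Fin r → G,
      (if (∑ i ∈ p.1, plant Y S i = 0) ∧ (∑ i ∈ p.2, plant Y S i = 0) then 1 else 0))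
      = ∑ p ∈ K ×ˢ K, n p := by
    exact Finset.sum_congr rfl (fun p _ => (Finset.card_filter _ _).symm)
  rw [hsum_eq]
  -- split off (S,S)
  have hSSmem : (S, S) ∈ K ×ˢ K := Finset.mem_product.mpr ⟨hSK, hSK⟩
  rw [← Finset.add_sum_erase _ _ hSSmem]
  set P' := (K ×ˢ K).erase (S, S) with hP'
  set mid : Finset (Fin r) × Finset (Fin r) → Prop := fun p =>
    p.1 = S ∨ p.2 = S ∨ p.1 = p.2 ∨ (p.1 ⊆ S ∪ p.2 ∧ p.2 ⊆ S ∪ p.1) with hmid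
  rw [← Finset.sum_filter_add_sum_filter_not P' mid]
  -- three bounds
  have bound0 : n (S, S) ≤ Fintype.card G ^ r := by
    calc n (S, S) ≤ (univ : Finset (Fin r → G)).card := Finset.card_filter_le _ _
      _ = Fintype.card G ^ r := by
          rw [Finset.card_univ, Fintype.card_fun, Fintype.card_fin]
  have bound1 : ∀ p ∈ P'.filter mid, n p ≤ Fintype.card G ^ (r - 1) := by
    rintro p hp
    have hpP : p ∈ P' := Finset.mem_of_mem_filter _ hp
    have hpK : p ∈ K ×ˢ K := Finset.mem_of_mem_erase hpP
    have hpne : p ≠ (S, S) := Finset.ne_of_mem_erase hpP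
    obtain ⟨h1K, h2K⟩ := Finset.mem_product.mp hpK
    by_cases h1 : p.1 = S
    · have h2 : p.2 ≠ S := by
        intro h2; exact hpne (Prod.ext h1 h2)
      have h2k : p.2.card = k := (Finset.mem_powersetCard.mp h2K).2
      obtain ⟨j, hjT, hjS⟩ := exists_mem_not_mem (le_of_eq (by omega)) h2
      calc n p ≤ (univ.filter fun Y : Fin r → G => ∑ i ∈ p.2, plant Y S i = 0).card := by
            apply Finset.card_le_card
            intro Y hY
            rw [Finset.mem_filter] at hY ⊢
            exact ⟨hY.1, hY.2.2⟩
        _ = Fintype.card G ^ (r - 1) := count_sigma_one S p.2 hjT hjS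
    · have h1k : p.1.card = k := (Finset.mem_powersetCard.mp h1K).2
      obtain ⟨j, hjT, hjS⟩ := exists_mem_not_mem (le_of_eq (by omega)) h1
      calc n p ≤ (univ.filter fun Y : Fin r → G => ∑ i ∈ p.1, plant Y S i = 0).card := by
            apply Finset.card_le_card
            intro Y hY
            rw [Finset.mem_filter] at hY ⊢
            exact ⟨hY.1, hY.2.1⟩
        _ = Fintype.card G ^ (r - 1) := count_sigma_one S p.1 hjT hjS
  have bound2 : ∀ p ∈ P'.filter (fun p => ¬ mid p), n p ≤ Fintype.card G ^ (r - 2) := by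
    rintro p hp
    rw [Finset.mem_filter] at hp
    obtain ⟨hpP, hnotmid⟩ := hp
    have hpK : p ∈ K ×ˢ K := Finset.mem_of_mem_erase hpP
    obtain ⟨h1K, h2K⟩ := Finset.mem_product.mp hpK
    have h1k : p.1.card = k := (Finset.mem_powersetCard.mp h1K).2
    have h2k : p.2.card = k := (Finset.mem_powersetCard.mp h2K).2
    simp only [hmid, not_or] at hnotmid
    obtain ⟨h1S, h2S, h12, hbad⟩ := hnotmid
    by_cases hc : p.1 ⊆ S ∪ p.2
    · -- then ¬ (p.2 ⊆ S ∪ p.1), pick j ∈ p.2 \ (S ∪ p.1)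
      have hc2 : ¬ p.2 ⊆ S ∪ p.1 := fun h => hbad ⟨hc, h⟩
      obtain ⟨j, hj2, hjSU⟩ := Finset.not_subset.mp hc2
      rw [Finset.mem_union] at hjSU
      push_neg at hjSU
      obtain ⟨j', hj'1, hj'S⟩ := exists_mem_not_mem (le_of_eq (by omega)) h1S
      have hne : j' ≠ j := by rintro rfl; exact hjSU.2 hj'1
      have : n p = Fintype.card G ^ (r - 2) := by
        show (univ.filter fun Y : Fin r → G =>
          (∑ i ∈ p.1, plant Y S i = 0) ∧ (∑ i ∈ p.2, plant Y S i = 0)).card = _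
        have : (univ.filter fun Y : Fin r → G =>
            (∑ i ∈ p.1, plant Y S i = 0) ∧ (∑ i ∈ p.2, plant Y S i = 0))
            = (univ.filter fun Y : Fin r → G =>
            (∑ i ∈ p.2, plant Y S i = 0) ∧ (∑ i ∈ p.1, plant Y S i = 0)) := by
          apply Finset.filter_congr; intro Y _; exact and_comm
        rw [this]
        exact count_sigma_two S p.2 p.1 hj2 hjSU.1 hjSU.2 hj'1 hj'S hne
      omega
    · obtain ⟨j, hj1, hjSU⟩ := Finset.not_subset.mp hc
      rw [Finset.mem_union] at hjSU
      push_neg at hjSU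
      obtain ⟨j', hj'2, hj'S⟩ := exists_mem_not_mem (le_of_eq (by omega)) h2S
      have hne : j' ≠ j := by rintro rfl; exact hjSU.2 hj'2
      have : n p = Fintype.card G ^ (r - 2) :=
        count_sigma_two S p.1 p.2 hj1 hjSU.1 hjSU.2 hj'2 hj'S hne
      omega
  -- cardinalities
  have cardM : (P'.filter mid).card ≤ 3 * (r.choose k - 1) + (badSet k S).card := by
    have hsub : P'.filter mid ⊆
        ({S} ×ˢ (K.erase S)) ∪ ((K.erase S) ×ˢ {S})
          ∪ ((K.erase S).image (fun T => (T, T))) ∪ badSet k S := by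
      intro p hp
      rw [Finset.mem_filter] at hp
      obtain ⟨hpP, hm⟩ := hp
      have hpK : p ∈ K ×ˢ K := Finset.mem_of_mem_erase hpP
      have hpne : p ≠ (S, S) := Finset.ne_of_mem_erase hpP
      obtain ⟨h1K, h2K⟩ := Finset.mem_product.mp hpK
      simp only [Finset.mem_union]
      by_cases h1 : p.1 = S
      · have h2 : p.2 ≠ S := fun h2 => hpne (Prod.ext h1 h2)
        left; left; left
        exact Finset.mem_product.mpr ⟨by simp [h1], Finset.mem_erase.mpr ⟨h2, h2K⟩⟩
      · by_cases h2 : p.2 = S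
        · left; left; right
          exact Finset.mem_product.mpr ⟨Finset.mem_erase.mpr ⟨h1, h1K⟩, by simp [h2]⟩
        · by_cases h12 : p.1 = p.2
          · left; right
            rw [Finset.mem_image]
            exact ⟨p.1, Finset.mem_erase.mpr ⟨h1, h1K⟩, Prod.ext rfl h12⟩
          · right
            rw [badSet, Finset.mem_filter]
            have hbad : p.1 ⊆ S ∪ p.2 ∧ p.2 ⊆ S ∪ p.1 := by
              rcases hm with h | h | h | h
              · exact absurd h h1
              · exact absurd h h2
              · exact absurd h h12
              · exact h
            exact ⟨Finset.mem_product.mpr ⟨Finset.mem_erase.mpr ⟨h1, h1K⟩,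
              Finset.mem_erase.mpr ⟨h2, h2K⟩⟩, h12, hbad⟩
    calc (P'.filter mid).card
        ≤ _ := Finset.card_le_card hsub
      _ ≤ (({S} ×ˢ (K.erase S)) ∪ ((K.erase S) ×ˢ {S})
            ∪ ((K.erase S).image (fun T => (T, T)))).card + (badSet k S).card :=
          Finset.card_union_le _ _
      _ ≤ (({S} ×ˢ (K.erase S)) ∪ ((K.erase S) ×ˢ {S})).card
            + ((K.erase S).image (fun T => (T, T))).card + (badSet k S).card := by
          have := Finset.card_union_le (({S} ×ˢ (K.erase S)) ∪ ((K.erase S) ×ˢ {S}))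
            ((K.erase S).image (fun T => (T, T)))
          omega
      _ ≤ ({S} ×ˢ (K.erase S)).card + ((K.erase S) ×ˢ {S}).card
            + ((K.erase S).image (fun T => (T, T))).card + (badSet k S).card := by
          have := Finset.card_union_le ({S} ×ˢ (K.erase S)) ((K.erase S) ×ˢ {S})
          omega
      _ ≤ 3 * (r.choose k - 1) + (badSet k S).card := by
          have h1 : ({S} ×ˢ (K.erase S)).card = r.choose k - 1 := by
            rw [Finset.card_product, Finset.card_singleton, one_mul, hNe]
          have h2 : ((K.erase S) ×ˢ {S}).card = r.choose k - 1 := by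
            rw [Finset.card_product, Finset.card_singleton, mul_one, hNe]
          have h3 : ((K.erase S).image (fun T => (T, T))).card ≤ r.choose k - 1 := by
            calc _ ≤ (K.erase S).card := Finset.card_image_le
              _ = _ := hNe
          omega
  have cardP'' : (P'.filter (fun p => ¬ mid p)).card ≤ (r.choose k - 1)^2 := by
    have hsub : P'.filter (fun p => ¬ mid p) ⊆ (K.erase S) ×ˢ (K.erase S) := by
      intro p hp
      rw [Finset.mem_filter] at hp
      obtain ⟨hpP, hnm⟩ := hp
      have hpK : p ∈ K ×ˢ K := Finset.mem_of_mem_erase hpP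
      obtain ⟨h1K, h2K⟩ := Finset.mem_product.mp hpK
      simp only [hmid, not_or] at hnm
      exact Finset.mem_product.mpr ⟨Finset.mem_erase.mpr ⟨hnm.1, h1K⟩,
        Finset.mem_erase.mpr ⟨hnm.2.1, h2K⟩⟩
    calc _ ≤ ((K.erase S) ×ˢ (K.erase S)).card := Finset.card_le_card hsub
      _ = (r.choose k - 1)^2 := by rw [Finset.card_product, hNe, sq]
  -- combine
  have t1 : ∑ p ∈ P'.filter mid, n p
      ≤ (3 * (r.choose k - 1) + (badSet k S).card) * Fintype.card G ^ (r - 1) := by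
    calc ∑ p ∈ P'.filter mid, n p
        ≤ ∑ _p ∈ P'.filter mid, Fintype.card G ^ (r - 1) := Finset.sum_le_sum bound1
      _ = (P'.filter mid).card * Fintype.card G ^ (r - 1) := by
          rw [Finset.sum_const, smul_eq_mul]
      _ ≤ _ := Nat.mul_le_mul_right _ cardM
  have t2 : ∑ p ∈ P'.filter (fun p => ¬ mid p), n p
      ≤ (r.choose k - 1)^2 * Fintype.card G ^ (r - 2) := by
    calc ∑ p ∈ P'.filter (fun p => ¬ mid p), n p
        ≤ ∑ _p ∈ P'.filter (fun p => ¬ mid p), Fintype.card G ^ (r - 2) :=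
          Finset.sum_le_sum bound2
      _ = (P'.filter (fun p => ¬ mid p)).card * Fintype.card G ^ (r - 2) := by
          rw [Finset.sum_const, smul_eq_mul]
      _ ≤ _ := Nat.mul_le_mul_right _ cardP''
  refine le_trans (show _ ≤ Fintype.card G ^ r
      + ((3 * (r.choose k - 1) + (badSet k S).card) * Fintype.card G ^ (r - 1)
        + (r.choose k - 1)^2 * Fintype.card G ^ (r - 2)) from
    add_le_add bound0 (add_le_add t1 t2)) (by omega)
end SecondMoment

section BadCount
variable {r k : ℕ}

lemma card_badSet_le (S : Finset (Fin r)) (hSk : S.card = k) :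
    (badSet k S).card
      ≤ ∑ t ∈ Finset.Icc 1 k,
          k.choose (2*t) * ((2*t).choose t) * ((r - 2*t).choose (k - t)) := by
  classical
  rw [Finset.card_eq_sum_card_fiberwise
    (f := fun p : Finset (Fin r) × Finset (Fin r) => (p.1 \ p.2).card)
    (t := Finset.Icc 1 k) ?hf]
  case hf =>
    intro p hp
    rw [Finset.mem_coe, badSet, Finset.mem_filter] at hp
    obtain ⟨hmem, hne, hb1, hb2⟩ := hp
    obtain ⟨h1, h2⟩ := Finset.mem_product.mp hmem
    have h1k : p.1.card = k := (Finset.mem_powersetCard.mp (Finset.mem_of_mem_erase h1)).2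
    simp only [Finset.mem_coe, Finset.mem_Icc]
    constructor
    · by_contra h
      push_neg at h
      interval_cases h' : (p.1 \ p.2).card
      have : p.1 \ p.2 = ∅ := Finset.card_eq_zero.mp h'
      have hsub : p.1 ⊆ p.2 := by
        intro x hx
        by_contra hx2
        have : x ∈ p.1 \ p.2 := Finset.mem_sdiff.mpr ⟨hx, hx2⟩
        simp [‹p.1 \ p.2 = ∅›] at this
      have h2k : p.2.card = k := (Finset.mem_powersetCard.mp (Finset.mem_of_mem_erase h2)).2
      exact hne (Finset.eq_of_subset_of_card_le hsub (by omega))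
    · calc (p.1 \ p.2).card ≤ p.1.card := Finset.card_le_card (Finset.sdiff_subset)
        _ = k := h1k
  apply Finset.sum_le_sum
  intro t ht
  rw [Finset.mem_Icc] at ht
  -- inject the fiber into a sigma set
  set tgt := (S.powersetCard (2*t)).sigma
    (fun R => (R.powersetCard t) ×ˢ ((univ \ R).powersetCard (k - t))) with htgt
  have hcard_tgt : tgt.card = k.choose (2*t) * ((2*t).choose t) * ((r - 2*t).choose (k - t)) := by
    rw [htgt, Finset.card_sigma]
    have : ∀ R ∈ S.powersetCard (2*t),
        ((R.powersetCard t) ×ˢ ((univ \ R).powersetCard (k - t))).card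
        = ((2*t).choose t) * ((r - 2*t).choose (k - t)) := by
      intro R hR
      obtain ⟨hRS, hRcard⟩ := Finset.mem_powersetCard.mp hR
      rw [Finset.card_product, Finset.card_powersetCard, Finset.card_powersetCard, hRcard,
        Finset.card_sdiff_of_subset (Finset.subset_univ R), Finset.card_univ, Fintype.card_fin, hRcard]
    rw [Finset.sum_congr rfl this, Finset.sum_const, Finset.card_powersetCard, hSk,
      smul_eq_mul, ← mul_assoc]
  rw [← hcard_tgt]
  apply Finset.card_le_card_of_injOn
    (fun p => ⟨(p.1 \ p.2) ∪ (p.2 \ p.1), ((p.1 \ p.2), (p.1 ∩ p.2))⟩)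
  · -- maps into tgt
    intro p hp
    rw [Finset.mem_coe, Finset.mem_filter] at hp
    obtain ⟨hpb, hft⟩ := hp
    rw [badSet, Finset.mem_filter] at hpb
    obtain ⟨hmem, hne, hb1, hb2⟩ := hpb
    obtain ⟨h1, h2⟩ := Finset.mem_product.mp hmem
    have h1k : p.1.card = k := (Finset.mem_powersetCard.mp (Finset.mem_of_mem_erase h1)).2
    have h2k : p.2.card = k := (Finset.mem_powersetCard.mp (Finset.mem_of_mem_erase h2)).2
    have hdisj : Disjoint (p.1 \ p.2) (p.2 \ p.1) := disjoint_sdiff_sdiff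
    have hc1 : (p.1 \ p.2).card + (p.1 ∩ p.2).card = k := by
      rw [Finset.card_sdiff_add_card_inter, h1k]
    have hc2 : (p.2 \ p.1).card + (p.1 ∩ p.2).card = k := by
      rw [Finset.inter_comm, Finset.card_sdiff_add_card_inter, h2k]
    have hc2' : (p.2 \ p.1).card = t := by omega
    simp only [Finset.mem_coe]
    rw [htgt, Finset.mem_sigma]
    refine ⟨?_, ?_⟩
    · rw [Finset.mem_powersetCard]
      constructor
      · intro x hx
        rw [Finset.mem_union, Finset.mem_sdiff, Finset.mem_sdiff] at hx
        rcases hx with ⟨hx1, hx2⟩ | ⟨hx2, hx1⟩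
        · rcases Finset.mem_union.mp (hb1 hx1) with h | h
          · exact h
          · exact absurd h hx2
        · rcases Finset.mem_union.mp (hb2 hx2) with h | h
          · exact h
          · exact absurd h hx1
      · rw [Finset.card_union_of_disjoint hdisj, hft, hc2']
        ring
    · rw [Finset.mem_product]
      constructor
      · rw [Finset.mem_powersetCard]
        exact ⟨Finset.subset_union_left, hft⟩
      · rw [Finset.mem_powersetCard]
        constructor
        · intro x hx
          rw [Finset.mem_inter] at hx
          rw [Finset.mem_sdiff]
          refine ⟨Finset.mem_univ x, ?_⟩
          rw [Finset.mem_union, Finset.mem_sdiff, Finset.mem_sdiff]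
          push_neg
          exact ⟨fun _ => hx.2, fun _ => hx.1⟩
        · show (p.1 ∩ p.2).card = k - t
          omega
  · -- injective
    intro p hp q hq heq
    simp only [Sigma.mk.inj_iff, heq_eq_eq, Prod.mk.injEq] at heq
    obtain ⟨hR, hP, hA⟩ := heq
    have hdisjp : Disjoint (p.1 \ p.2) (p.2 \ p.1) := disjoint_sdiff_sdiff
    have hdisjq : Disjoint (q.1 \ q.2) (q.2 \ q.1) := disjoint_sdiff_sdiff
    have hQ : p.2 \ p.1 = q.2 \ q.1 := by
      have e1 : ((p.1 \ p.2) ∪ (p.2 \ p.1)) \ (p.1 \ p.2) = p.2 \ p.1 :=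
        Finset.union_sdiff_cancel_left hdisjp
      have e2 : ((q.1 \ q.2) ∪ (q.2 \ q.1)) \ (q.1 \ q.2) = q.2 \ q.1 :=
        Finset.union_sdiff_cancel_left hdisjq
      rw [← e1, ← e2, hR, hP]
    have hT : p.1 = q.1 := by
      rw [← Finset.sdiff_union_inter p.1 p.2, ← Finset.sdiff_union_inter q.1 q.2, hP, hA]
    have hU : p.2 = q.2 := by
      rw [← Finset.sdiff_union_inter p.2 p.1, ← Finset.sdiff_union_inter q.2 q.1, hQ,
        Finset.inter_comm p.2 p.1, Finset.inter_comm q.2 q.1, hA]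
    exact Prod.ext hT hU
end BadCount

lemma two_mul_centralBinom_le (t : ℕ) (ht : 1 ≤ t) : 2 * (2*t).choose t ≤ 4^t := by
  induction t with
  | zero => omega
  | succ n ih =>
    by_cases hn : 1 ≤ n
    · have key : (n+1) * (2*(n+1)).choose (n+1) = 2 * (2*n+1) * (2*n).choose n := by
        have := Nat.succ_mul_centralBinom_succ n
        simpa [Nat.centralBinom, Nat.mul_succ, Nat.succ_eq_add_one, two_mul] using this
      have h4 : 4^(n+1) = 4 * 4^n := by ring
      have ihn := ih hn
      -- (n+1) * (2 * C) = 2*(2*(2n+1)*Cn) ≤ (n+1)*4^{n+1}... 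
      have : (n+1) * (2 * (2*(n+1)).choose (n+1)) ≤ (n+1) * 4^(n+1) := by
        calc (n+1) * (2 * (2*(n+1)).choose (n+1))
            = 2 * ((n+1) * (2*(n+1)).choose (n+1)) := by ring
          _ = 2 * (2 * (2*n+1) * (2*n).choose n) := by rw [key]
          _ = (2*n+1) * 2 * (2 * (2*n).choose n) := by ring
          _ ≤ (2*n+1) * 2 * 4^n := Nat.mul_le_mul_left _ ihn
          _ ≤ (n+1) * (4 * 4^n) := by nlinarith
          _ = (n+1) * 4^(n+1) := by rw [h4]
      exact Nat.le_of_mul_le_mul_left this (by omega)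
    · have : n = 0 := by omega
      subst this
      simp [Nat.choose]


lemma choose_tail_even (k : ℕ) :
    ∑ t ∈ Finset.range (k+2), k.choose (2*t) = ∑ t ∈ Finset.range (k+1), k.choose (2*t) := by
  rw [Finset.sum_range_succ]
  have : 2*(k+1) > k := by omega
  rw [Nat.choose_eq_zero_of_lt this, add_zero]

lemma choose_tail_odd (k : ℕ) :
    ∑ t ∈ Finset.range (k+2), k.choose (2*t+1) = ∑ t ∈ Finset.range (k+1), k.choose (2*t+1) := by
  rw [Finset.sum_range_succ]
  have : 2*(k+1)+1 > k := by omega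
  rw [Nat.choose_eq_zero_of_lt this, add_zero]

lemma E_rec (k : ℕ) :
    ∑ t ∈ Finset.range (k+2), (k+1).choose (2*t)
      = ∑ t ∈ Finset.range (k+1), k.choose (2*t)
        + ∑ t ∈ Finset.range (k+1), k.choose (2*t+1) := by
  rw [Finset.sum_range_succ' (fun t => (k+1).choose (2*t)) (k+1)]
  have h1 : ∀ t, (k+1).choose (2*(t+1)) = k.choose (2*t+1) + k.choose (2*t+2) := by
    intro t
    have : 2*(t+1) = (2*t+1)+1 := by ring
    rw [this, Nat.choose_succ_succ]
  simp_rw [h1]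
  rw [Finset.sum_add_distrib]
  have h2 : ∑ t ∈ Finset.range (k+1), k.choose (2*t+2)
      = ∑ t ∈ Finset.range (k+1), k.choose (2*t) - 1 := by
    have e1 : ∑ t ∈ Finset.range (k+2), k.choose (2*t)
        = (∑ t ∈ Finset.range (k+1), k.choose (2*(t+1))) + k.choose 0 :=
      Finset.sum_range_succ' (fun t => k.choose (2*t)) (k+1)
    have e2 : ∀ t, 2*(t+1) = 2*t+2 := fun t => by ring
    simp_rw [e2] at e1
    have := choose_tail_even k
    simp [Nat.choose_zero_right] at e1
    omega
  have h3 : 1 ≤ ∑ t ∈ Finset.range (k+1), k.choose (2*t) := by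
    calc 1 = k.choose (2*0) := by simp
      _ ≤ _ := Finset.single_le_sum (f := fun t => k.choose (2*t))
          (fun _ _ => Nat.zero_le _) (Finset.mem_range.mpr (by omega))
  rw [h2]
  simp [Nat.choose_zero_right]
  omega

lemma O_rec (k : ℕ) :
    ∑ t ∈ Finset.range (k+2), (k+1).choose (2*t+1)
      = ∑ t ∈ Finset.range (k+1), k.choose (2*t)
        + ∑ t ∈ Finset.range (k+1), k.choose (2*t+1) := by
  have h1 : ∀ t, (k+1).choose (2*t+1) = k.choose (2*t) + k.choose (2*t+1) := by
    intro t; rw [Nat.choose_succ_succ]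
  simp_rw [h1]
  rw [Finset.sum_add_distrib, choose_tail_even, choose_tail_odd]

lemma EO (k : ℕ) :
    ∑ t ∈ Finset.range (k+1), k.choose (2*t)
      + ∑ t ∈ Finset.range (k+1), k.choose (2*t+1) = 2^k := by
  induction k with
  | zero => simp
  | succ n ih => rw [E_rec, O_rec, ih]; ring

/-- sum of even binomial coefficients -/
lemma even_binom_sum (k : ℕ) (hk : 1 ≤ k) :
    ∑ t ∈ Finset.range (k+1), k.choose (2*t) = 2^(k-1) := by
  obtain ⟨n, rfl⟩ : ∃ n, k = n + 1 := ⟨k - 1, by omega⟩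
  rw [E_rec, EO]
  simp

lemma choose_two_step (n m : ℕ) (h2 : 2 ≤ n) (hm : 1 ≤ m) (hmn : m ≤ n) :
    (n-2).choose (m-1) * (n * (n-1)) = n.choose m * (m * (n-m)) := by
  have e1 : (n-2) + 1 = n - 1 := by omega
  have i1 := Nat.choose_mul_succ_eq (n-2) (m-1)
  rw [e1] at i1
  have e2 : (n-1) - (m-1) = n - m := by omega
  rw [e2] at i1
  have i2 := Nat.add_one_mul_choose_eq (n-1) (m-1)
  have e3 : (n-1) + 1 = n := by omega
  have e4 : (m-1) + 1 = m := by omega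
  rw [e3, e4] at i2
  calc (n-2).choose (m-1) * (n * (n-1)) = n * ((n-2).choose (m-1) * (n-1)) := by ring
    _ = n * ((n-1).choose (m-1) * (n-m)) := by rw [i1]
    _ = (n * (n-1).choose (m-1)) * (n-m) := by ring
    _ = (n.choose m * m) * (n-m) := by rw [i2]
    _ = n.choose m * (m * (n-m)) := by ring

lemma choose_ratio (r k : ℕ) (hk : 2 ≤ k) (hkr : 2*k ≤ r) :
    ∀ t : ℕ, 1 ≤ t → 2*t ≤ k →
      ((r - 2*t).choose (k - t) : ℝ) * ((r : ℝ) * ((k - t + 1 : ℕ) : ℝ) * 4^(t-1))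
        ≤ (r.choose k : ℝ) * (k : ℝ)^2 := by
  intro t
  induction t with
  | zero => omega
  | succ t ih =>
    intro _ h2t
    by_cases ht : 1 ≤ t
    · -- inductive step
      obtain ⟨n, hn⟩ : ∃ n, r - 2*t = n := ⟨_, rfl⟩
      obtain ⟨m, hm⟩ : ∃ m, k - t = m := ⟨_, rfl⟩
      have hm1 : 1 ≤ m := by omega
      have hn2m : 2*m ≤ n := by omega
      have hn2 : 2 ≤ n := by omega
      have hidx1 : r - 2*(t+1) = n - 2 := by omega
      have hidx2 : k - (t+1) = m - 1 := by omega
      have hidx3 : k - (t+1) + 1 = m := by omega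
      have hidx4 : (t+1) - 1 = t := by omega
      rw [hidx1, hidx3, hidx2, hidx4]
      have hID := choose_two_step n m hn2 hm1 (by omega)
      have hIDR : ((n-2).choose (m-1) : ℝ) * ((n:ℝ) * ((n:ℝ)-1))
          = (n.choose m : ℝ) * ((m:ℝ) * ((n:ℝ)-(m:ℝ))) := by
        have h' := congrArg (fun x : ℕ => (x : ℝ)) hID
        push_cast [Nat.cast_sub (show 1 ≤ n by omega),
          Nat.cast_sub (show m ≤ n by omega)] at h'
        linarith [h']
      have harith : 4*(m:ℝ)^2*((n:ℝ)-(m:ℝ)) ≤ ((m:ℝ)+1) * ((n:ℝ) * ((n:ℝ)-1)) := by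
        have hm' : (1:ℝ) ≤ (m:ℝ) := by exact_mod_cast hm1
        have hn' : 2*(m:ℝ) ≤ (n:ℝ) := by exact_mod_cast hn2m
        nlinarith [sq_nonneg ((n:ℝ) - 2*(m:ℝ)), sq_nonneg ((m:ℝ)-1)]
      have ihh := ih ht (by omega)
      rw [hn, hm] at ihh
      push_cast at ihh
      have hmkt : ((m:ℝ) + 1) = ((m:ℝ)+1) := rfl
      -- multiply target by n(n-1) > 0
      have hpos : (0:ℝ) < (n:ℝ) * ((n:ℝ)-1) := by
        have : (2:ℝ) ≤ (n:ℝ) := by exact_mod_cast hn2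
        nlinarith
      rw [← mul_le_mul_iff_of_pos_right hpos]
      have hc : (0:ℝ) ≤ ((n:ℝ)-(m:ℝ)) := by
        have : (m:ℝ) ≤ (n:ℝ) := by exact_mod_cast (by omega : m ≤ n)
        linarith
      have h4t : (4:ℝ)^(t+1-1) = 4 * 4^(t-1) := by
        rw [hidx4]
        obtain ⟨s, rfl⟩ : ∃ s, t = s + 1 := ⟨t-1, by omega⟩
        simp [pow_succ]
        ring
      calc ((n-2).choose (m-1) : ℝ) * ((r:ℝ) * (m:ℝ) * 4^(t+1-1)) * ((n:ℝ)*((n:ℝ)-1))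
          = ((r:ℝ) * (m:ℝ) * 4^(t+1-1)) * (((n-2).choose (m-1) : ℝ) * ((n:ℝ)*((n:ℝ)-1))) := by
            ring
        _ = ((r:ℝ) * (m:ℝ) * 4^(t+1-1)) * ((n.choose m : ℝ) * ((m:ℝ) * ((n:ℝ)-(m:ℝ)))) := by
            rw [hIDR]
        _ = (n.choose m : ℝ) * (r:ℝ) * 4^(t-1) * (4*(m:ℝ)^2*((n:ℝ)-(m:ℝ))) := by
            rw [h4t]; ring
        _ ≤ (n.choose m : ℝ) * (r:ℝ) * 4^(t-1) * (((m:ℝ)+1) * ((n:ℝ) * ((n:ℝ)-1))) := by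
            apply mul_le_mul_of_nonneg_left harith
            positivity
        _ = ((n.choose m : ℝ) * ((r:ℝ) * ((m:ℝ)+1) * 4^(t-1))) * ((n:ℝ)*((n:ℝ)-1)) := by
            ring
        _ ≤ (r.choose k : ℝ) * (k:ℝ)^2 * ((n:ℝ)*((n:ℝ)-1)) := by
            apply mul_le_mul_of_nonneg_right ihh (le_of_lt hpos)
    · -- base case t = 0, so t+1 = 1
      have ht0 : t = 0 := by omega
      subst ht0
      have e : r - 2*(0+1) = r - 2 := by omega
      have e'' : k - (0+1) + 1 = k := by omega
      have e' : k - (0+1) = k - 1 := by omega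
      have e''' : (0+1) - 1 = 0 := by omega
      rw [e, e'', e', e''']
      have hID := choose_two_step r k (by omega) (by omega) (by omega)
      have hIDR : ((r-2).choose (k-1) : ℝ) * ((r:ℝ) * ((r:ℝ)-1))
          = (r.choose k : ℝ) * ((k:ℝ) * ((r:ℝ)-(k:ℝ))) := by
        have h' := congrArg (fun x : ℕ => (x : ℝ)) hID
        push_cast [Nat.cast_sub (show 1 ≤ r by omega),
          Nat.cast_sub (show k ≤ r by omega)] at h'
        linarith [h']
      have hpos : (0:ℝ) < (r:ℝ) - 1 := by
        have : (4:ℝ) ≤ (r:ℝ) := by exact_mod_cast (by omega : 4 ≤ r)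
        linarith
      rw [← mul_le_mul_iff_of_pos_right hpos]
      have hkr' : (k:ℝ) ≥ 2 := by exact_mod_cast hk
      have hck : (0:ℝ) ≤ (r.choose k : ℝ) := by positivity
      have hrk1 : (r:ℝ) - (k:ℝ) ≤ (r:ℝ) - 1 := by linarith
      have hrk0 : (0:ℝ) ≤ (r:ℝ) - (k:ℝ) := by
        have : (k:ℝ) ≤ (r:ℝ) := by exact_mod_cast (by omega : k ≤ r)
        linarith
      calc ((r-2).choose (k-1) : ℝ) * ((r:ℝ) * (k:ℝ) * 4^(0:ℕ)) * ((r:ℝ)-1)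
          = (k:ℝ) * (((r-2).choose (k-1) : ℝ) * ((r:ℝ) * ((r:ℝ)-1))) := by
            norm_num; ring
        _ = (k:ℝ) * ((r.choose k : ℝ) * ((k:ℝ) * ((r:ℝ)-(k:ℝ)))) := by rw [hIDR]
        _ = (r.choose k : ℝ) * (k:ℝ)^2 * ((r:ℝ)-(k:ℝ)) := by ring
        _ ≤ (r.choose k : ℝ) * (k:ℝ)^2 * ((r:ℝ)-1) := by
            apply mul_le_mul_of_nonneg_left hrk1
            positivity

lemma badsum_le (r k : ℕ) (hk : 2 ≤ k) (hkr : 2*k ≤ r) :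
    ((∑ t ∈ Finset.Icc 1 k,
        k.choose (2*t) * ((2*t).choose t) * ((r - 2*t).choose (k - t)) : ℕ) : ℝ)
      ≤ 2^k * (k:ℝ)^2 / (r:ℝ) * (r.choose k : ℝ) := by
  have hr0 : (0:ℝ) < (r:ℝ) := by
    have : (1:ℕ) ≤ r := by omega
    exact_mod_cast Nat.lt_of_lt_of_le Nat.zero_lt_one this
  push_cast
  have per : ∀ t ∈ Finset.Icc 1 k,
      (k.choose (2*t) : ℝ) * ((2*t).choose t : ℝ) * ((r - 2*t).choose (k - t) : ℝ)
        ≤ (k.choose (2*t) : ℝ) * (2 * (k:ℝ)^2 / (r:ℝ) * (r.choose k : ℝ)) := by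
    intro t ht
    rw [Finset.mem_Icc] at ht
    by_cases h2t : 2*t ≤ k
    · have hcr := choose_ratio r k hk hkr t ht.1 h2t
      have hcb : ((2*t).choose t : ℝ) ≤ 2 * 4^(t-1) := by
        have h := two_mul_centralBinom_le t ht.1
        have h4 : (4:ℕ)^t = 4 * 4^(t-1) := by
          obtain ⟨s, rfl⟩ : ∃ s, t = s + 1 := ⟨t-1, by omega⟩
          simp [pow_succ]; ring
        rw [h4] at h
        have : ((2*t).choose t : ℝ) * 2 ≤ 2 * (4:ℝ) ^ (t-1) * 2 := by
          have := (Nat.cast_le (α := ℝ)).mpr h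
          push_cast at this
          linarith
        linarith
      -- key : C(2t,t) * C(r-2t,k-t) ≤ 2*k^2/r * C(r,k)
      have hkey : ((2*t).choose t : ℝ) * ((r - 2*t).choose (k - t) : ℝ)
          ≤ 2 * (k:ℝ)^2 / (r:ℝ) * (r.choose k : ℝ) := by
        rw [div_mul_eq_mul_div, le_div_iff₀ hr0]
        have c0 : (0:ℝ) ≤ ((r - 2*t).choose (k - t) : ℝ) := Nat.cast_nonneg _
        have c1 : ((2*t).choose t : ℝ) * ((r - 2*t).choose (k - t) : ℝ) * (r:ℝ)
            ≤ (2 * 4^(t-1)) * (((r - 2*t).choose (k - t) : ℝ) * (r:ℝ)) := by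
          have := mul_le_mul_of_nonneg_right hcb
            (mul_nonneg c0 (le_of_lt hr0))
          linarith [this]
        have hk1 : (1:ℝ) ≤ ((k - t + 1 : ℕ) : ℝ) := by exact_mod_cast Nat.succ_le_succ (Nat.zero_le _)
        have c2 : ((r - 2*t).choose (k - t) : ℝ) * (r:ℝ)
            ≤ ((r - 2*t).choose (k - t) : ℝ) * ((r:ℝ) * ((k - t + 1 : ℕ) : ℝ)) := by
          have h0 : (0:ℝ) ≤ ((r - 2*t).choose (k - t) : ℝ) * (r:ℝ) :=
            mul_nonneg c0 (le_of_lt hr0)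
          nlinarith
        have c3 : (2 * (4:ℝ)^(t-1)) * (((r - 2*t).choose (k - t) : ℝ) * (r:ℝ))
            ≤ 2 * (((r - 2*t).choose (k - t) : ℝ) * ((r:ℝ) * ((k - t + 1 : ℕ) : ℝ) * 4^(t-1))) := by
          have h40 : (0:ℝ) < (4:ℝ)^(t-1) := by positivity
          nlinarith [mul_le_mul_of_nonneg_right c2 (le_of_lt h40)]
        calc ((2*t).choose t : ℝ) * ((r - 2*t).choose (k - t) : ℝ) * (r:ℝ)
            ≤ (2 * 4^(t-1)) * (((r - 2*t).choose (k - t) : ℝ) * (r:ℝ)) := c1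
          _ ≤ 2 * (((r - 2*t).choose (k - t) : ℝ) * ((r:ℝ) * ((k - t + 1 : ℕ) : ℝ) * 4^(t-1))) := c3
          _ ≤ 2 * ((r.choose k : ℝ) * (k:ℝ)^2) := by linarith [hcr]
          _ = 2 * (k:ℝ)^2 * (r.choose k:ℝ) := by ring
      calc (k.choose (2*t) : ℝ) * ((2*t).choose t : ℝ) * ((r - 2*t).choose (k - t) : ℝ)
          = (k.choose (2*t) : ℝ) * (((2*t).choose t : ℝ) * ((r - 2*t).choose (k - t) : ℝ)) := by
            ring
        _ ≤ (k.choose (2*t) : ℝ) * (2 * (k:ℝ)^2 / (r:ℝ) * (r.choose k : ℝ)) := by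
            apply mul_le_mul_of_nonneg_left hkey (Nat.cast_nonneg _)
    · have : k.choose (2*t) = 0 := Nat.choose_eq_zero_of_lt (by omega)
      rw [this]
      simp
  calc (∑ t ∈ Finset.Icc 1 k,
      (k.choose (2*t) : ℝ) * ((2*t).choose t : ℝ) * ((r - 2*t).choose (k - t) : ℝ))
      ≤ ∑ t ∈ Finset.Icc 1 k, (k.choose (2*t) : ℝ) * (2 * (k:ℝ)^2 / (r:ℝ) * (r.choose k : ℝ)) :=
        Finset.sum_le_sum per
    _ = (∑ t ∈ Finset.Icc 1 k, (k.choose (2*t) : ℝ)) * (2 * (k:ℝ)^2 / (r:ℝ) * (r.choose k : ℝ)) := by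
        rw [← Finset.sum_mul]
    _ ≤ (2^(k-1) : ℝ) * (2 * (k:ℝ)^2 / (r:ℝ) * (r.choose k : ℝ)) := by
        apply mul_le_mul_of_nonneg_right
        · have hsub : Finset.Icc 1 k ⊆ Finset.range (k+1) := by
            intro t ht
            rw [Finset.mem_Icc] at ht
            rw [Finset.mem_range]
            omega
          have hle : ∑ t ∈ Finset.Icc 1 k, k.choose (2*t)
              ≤ ∑ t ∈ Finset.range (k+1), k.choose (2*t) :=
            Finset.sum_le_sum_of_subset hsub
          rw [even_binom_sum k (by omega)] at hle
          calc (∑ t ∈ Finset.Icc 1 k, (k.choose (2*t) : ℝ))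
              = ((∑ t ∈ Finset.Icc 1 k, k.choose (2*t) : ℕ) : ℝ) := by push_cast; rfl
            _ ≤ ((2^(k-1) : ℕ) : ℝ) := by exact_mod_cast hle
            _ = (2^(k-1) : ℝ) := by push_cast; rfl
        · positivity
    _ = 2^(k-1) * 2 * (k:ℝ)^2 / (r:ℝ) * (r.choose k : ℝ) := by ring
    _ = 2^k * (k:ℝ)^2 / (r:ℝ) * (r.choose k : ℝ) := by
        have h2 : (2:ℝ)^(k-1) * 2 = 2^k := by
          rw [← pow_succ]
          congr 1
          omega
        rw [← h2]



section Reduction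
variable {G : Type} [AddCommGroup G] [Fintype G] [DecidableEq G] {r k : ℕ}

lemma sum_cnt_mul (φ : (Fin r → G) → ℝ) :
    ∑ X : Fin r → G,
      ((((univ : Finset ((Fin r → G) × Finset (Fin r))).filter
        (fun p => p.2.card = k ∧ plant p.1 p.2 = X)).card : ℝ) * φ X)
      = ∑ S ∈ (univ : Finset (Fin r)).powersetCard k, ∑ Y : Fin r → G, φ (plant Y S) := by
  classical
  have hcnt : ∀ X : Fin r → G,
      ((((univ : Finset ((Fin r → G) × Finset (Fin r))).filter
        (fun p => p.2.card = k ∧ plant p.1 p.2 = X)).card : ℝ)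
      = ∑ p : (Fin r → G) × Finset (Fin r),
          if p.2.card = k ∧ plant p.1 p.2 = X then (1:ℝ) else 0) := by
    intro X
    rw [Finset.card_filter]
    push_cast
    rfl
  simp_rw [hcnt, Finset.sum_mul]
  rw [Finset.sum_comm]
  have inner : ∀ p : (Fin r → G) × Finset (Fin r),
      (∑ X : Fin r → G, (if p.2.card = k ∧ plant p.1 p.2 = X then (1:ℝ) else 0) * φ X)
      = if p.2.card = k then φ (plant p.1 p.2) else 0 := by
    intro p
    by_cases hp : p.2.card = k
    · simp only [hp, true_and]
      rw [Finset.sum_congr rfl (fun X _ => by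
        rw [ite_mul, one_mul, zero_mul])]
      rw [Finset.sum_ite_eq univ (plant p.1 p.2) φ]
      simp
    · simp [hp]
  rw [Finset.sum_congr rfl (fun p _ => inner p)]
  rw [Fintype.sum_prod_type]
  rw [Finset.sum_comm]
  have : ∀ S : Finset (Fin r),
      (∑ Y : Fin r → G, if S.card = k then φ (plant Y S) else 0)
      = if S.card = k then (∑ Y : Fin r → G, φ (plant Y S)) else 0 := by
    intro S; split <;> simp
  rw [Finset.sum_congr rfl (fun S _ => this S)]
  rw [← Finset.sum_filter]
  apply Finset.sum_congr
  · ext S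
    simp [Finset.mem_powersetCard, Finset.subset_univ]
  · intros; rfl

lemma sum_pmf_phi (φ : (Fin r → G) → ℝ) :
    ∑ X : Fin r → G, D1pmf k X * φ X
      = (∑ S ∈ (univ : Finset (Fin r)).powersetCard k, ∑ Y : Fin r → G, φ (plant Y S))
        / ((Fintype.card G : ℝ) ^ r * (r.choose k : ℝ)) := by
  unfold D1pmf
  simp_rw [div_mul_eq_mul_div]
  rw [← Finset.sum_div]
  congr 1
  exact sum_cnt_mul φ
end Reduction

/-- **Variance of the number of solutions under the planted distribution.**
For `2 ≤ k` and `2k ≤ r`, and `X ∼ D1`,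
`Var(c(X)) < (C(r,k)/|G|)·(1 + 2^k·k²/r)`. -/
theorem numSol_variance_planted
    (G : Type) [AddCommGroup G] [Fintype G] [DecidableEq G]
    (k r : ℕ) (hk : 2 ≤ k) (hkr : 2 * k ≤ r) :
    varD1 G k r
      < ((r.choose k : ℝ) / (Fintype.card G : ℝ))
          * (1 + (2 : ℝ) ^ k * (k : ℝ) ^ 2 / (r : ℝ)) := by
  classical
  have hq1 : 1 ≤ Fintype.card G := Fintype.card_pos
  have hN1 : 1 ≤ r.choose k := Nat.choose_pos (by omega)
  have hr4 : 4 ≤ r := by omega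
  have hQ0 : (0:ℝ) < (Fintype.card G : ℝ) := by exact_mod_cast hq1
  have hQne : (Fintype.card G : ℝ) ≠ 0 := ne_of_gt hQ0
  have hN0 : (0:ℝ) < (r.choose k : ℝ) := by exact_mod_cast hN1
  have hNne : (r.choose k : ℝ) ≠ 0 := ne_of_gt hN0
  have hQr : (0:ℝ) < (Fintype.card G : ℝ)^r := by positivity
  have hKcard : ((univ : Finset (Fin r)).powersetCard k).card = r.choose k := by
    rw [Finset.card_powersetCard, Finset.card_univ, Fintype.card_fin]
  obtain ⟨r2, hr2⟩ : ∃ r2, r = r2 + 2 := ⟨r - 2, by omega⟩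
  have er1 : r - 1 = r2 + 1 := by omega
  have er2 : r - 2 = r2 := by omega
  have e1 : (Fintype.card G : ℝ)^r = (Fintype.card G : ℝ)^(r-1) * (Fintype.card G : ℝ) := by
    rw [← pow_succ]; congr 1; omega
  -- first moment
  have hmu_sum : ∑ S ∈ (univ : Finset (Fin r)).powersetCard k,
        ∑ Y : Fin r → G, (numSol k (plant Y S) : ℝ)
      = (r.choose k : ℝ) * ((Fintype.card G : ℝ)^r
          + ((r.choose k : ℝ)-1) * (Fintype.card G : ℝ)^(r-1)) := by
    have hterm : ∀ S ∈ (univ : Finset (Fin r)).powersetCard k,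
        (∑ Y : Fin r → G, (numSol k (plant Y S) : ℝ))
        = (Fintype.card G : ℝ)^r + ((r.choose k : ℝ)-1) * (Fintype.card G : ℝ)^(r-1) := by
      intro S hS
      have hSk : S.card = k := (Finset.mem_powersetCard.mp hS).2
      have hnat := sum_numSol_plant (G := G) S hSk (by omega)
      calc (∑ Y : Fin r → G, (numSol k (plant Y S) : ℝ))
          = ((∑ Y : Fin r → G, numSol k (plant Y S) : ℕ) : ℝ) := by push_cast; rfl
        _ = ((Fintype.card G^r + (r.choose k - 1) * Fintype.card G^(r-1) : ℕ) : ℝ) := by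
            rw [hnat]
        _ = (Fintype.card G : ℝ)^r + ((r.choose k : ℝ)-1) * (Fintype.card G : ℝ)^(r-1) := by
            push_cast [Nat.cast_sub hN1]
            ring
    rw [Finset.sum_congr rfl hterm, Finset.sum_const, hKcard, nsmul_eq_mul]
  have hred1 := sum_pmf_phi (G := G) (r := r) (k := k) (fun X => ((numSol k X : ℕ) : ℝ))
  have hmu : expD1 G k r = 1 + ((r.choose k : ℝ)-1)/(Fintype.card G : ℝ) := by
    unfold expD1
    rw [hred1, hmu_sum, e1]
    field_simp
  -- second moment
  have hbadsum := badsum_le r k hk hkr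
  have hsq : ∑ S ∈ (univ : Finset (Fin r)).powersetCard k,
        ∑ Y : Fin r → G, ((numSol k (plant Y S) : ℝ))^2
      ≤ (r.choose k : ℝ) * ((Fintype.card G : ℝ)^r
          + (3*((r.choose k : ℝ)-1)
              + ((∑ t ∈ Finset.Icc 1 k,
                  k.choose (2*t) * ((2*t).choose t) * ((r - 2*t).choose (k - t)) : ℕ) : ℝ))
            * (Fintype.card G : ℝ)^(r-1)
          + ((r.choose k : ℝ)-1)^2 * (Fintype.card G : ℝ)^(r-2)) := by
    have hterm : ∀ S ∈ (univ : Finset (Fin r)).powersetCard k,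
        (∑ Y : Fin r → G, ((numSol k (plant Y S) : ℝ))^2)
        ≤ (Fintype.card G : ℝ)^r
          + (3*((r.choose k : ℝ)-1)
              + ((∑ t ∈ Finset.Icc 1 k,
                  k.choose (2*t) * ((2*t).choose t) * ((r - 2*t).choose (k - t)) : ℕ) : ℝ))
            * (Fintype.card G : ℝ)^(r-1)
          + ((r.choose k : ℝ)-1)^2 * (Fintype.card G : ℝ)^(r-2) := by
      intro S hS
      have hSk : S.card = k := (Finset.mem_powersetCard.mp hS).2
      have h1 := sum_numSol_sq_le (G := G) S hSk (by omega)
      have h2 := card_badSet_le (k := k) S hSk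
      have h3 : ∑ Y : Fin r → G, (numSol k (plant Y S))^2
          ≤ Fintype.card G^r
            + (3*(r.choose k - 1) + ∑ t ∈ Finset.Icc 1 k,
                k.choose (2*t) * ((2*t).choose t) * ((r - 2*t).choose (k - t)))
              * Fintype.card G^(r-1)
            + (r.choose k - 1)^2 * Fintype.card G^(r-2) := by
        have hmul := Nat.mul_le_mul_right (Fintype.card G^(r-1))
          (Nat.add_le_add_left h2 (3*(r.choose k - 1)))
        omega
      calc (∑ Y : Fin r → G, ((numSol k (plant Y S) : ℝ))^2)
          = ((∑ Y : Fin r → G, (numSol k (plant Y S))^2 : ℕ) : ℝ) := by push_cast; rfl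
        _ ≤ ((Fintype.card G^r
            + (3*(r.choose k - 1) + ∑ t ∈ Finset.Icc 1 k,
                k.choose (2*t) * ((2*t).choose t) * ((r - 2*t).choose (k - t)))
              * Fintype.card G^(r-1)
            + (r.choose k - 1)^2 * Fintype.card G^(r-2) : ℕ) : ℝ) := by exact_mod_cast h3
        _ = _ := by
            push_cast [Nat.cast_sub hN1]
            ring
    calc ∑ S ∈ (univ : Finset (Fin r)).powersetCard k,
          ∑ Y : Fin r → G, ((numSol k (plant Y S) : ℝ))^2
        ≤ ∑ _S ∈ (univ : Finset (Fin r)).powersetCard k,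
            ((Fintype.card G : ℝ)^r
              + (3*((r.choose k : ℝ)-1)
                  + ((∑ t ∈ Finset.Icc 1 k,
                      k.choose (2*t) * ((2*t).choose t) * ((r - 2*t).choose (k - t)) : ℕ) : ℝ))
                * (Fintype.card G : ℝ)^(r-1)
              + ((r.choose k : ℝ)-1)^2 * (Fintype.card G : ℝ)^(r-2)) :=
          Finset.sum_le_sum hterm
      _ = _ := by rw [Finset.sum_const, hKcard, nsmul_eq_mul]
  -- variance identity
  have hcardY : ((univ : Finset (Fin r → G)).card : ℝ) = (Fintype.card G : ℝ)^r := by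
    rw [Finset.card_univ, Fintype.card_fun, Fintype.card_fin]
    push_cast
    rfl
  have hDmu : (r.choose k : ℝ)*((Fintype.card G : ℝ)^r
        + ((r.choose k : ℝ)-1)*(Fintype.card G : ℝ)^(r-1))
      = (Fintype.card G : ℝ)^r*(r.choose k : ℝ)*(expD1 G k r) := by
    rw [hmu, e1]
    field_simp
  have hvar : varD1 G k r
      = (∑ S ∈ (univ : Finset (Fin r)).powersetCard k,
          ∑ Y : Fin r → G, ((numSol k (plant Y S) : ℝ))^2)
            / ((Fintype.card G : ℝ)^r * (r.choose k : ℝ))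
        - (expD1 G k r)^2 := by
    have hred3 := sum_pmf_phi (G := G) (r := r) (k := k)
      (fun X => (((numSol k X : ℕ) : ℝ) - expD1 G k r)^2)
    unfold varD1
    rw [hred3]
    have expand : ∀ S ∈ (univ : Finset (Fin r)).powersetCard k,
        (∑ Y : Fin r → G, ((numSol k (plant Y S) : ℝ) - expD1 G k r)^2)
        = (∑ Y : Fin r → G, ((numSol k (plant Y S) : ℝ))^2)
          - 2*(expD1 G k r)*(∑ Y : Fin r → G, (numSol k (plant Y S) : ℝ))
          + (Fintype.card G : ℝ)^r * (expD1 G k r)^2 := by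
      intro S _
      have hY : ∀ Y : Fin r → G, ((numSol k (plant Y S) : ℝ) - expD1 G k r)^2
          = ((numSol k (plant Y S) : ℝ))^2
            - 2*(expD1 G k r)*(numSol k (plant Y S) : ℝ) + (expD1 G k r)^2 := by
        intro Y; ring
      rw [Finset.sum_congr rfl (fun Y _ => hY Y), Finset.sum_add_distrib,
        Finset.sum_sub_distrib, ← Finset.mul_sum, Finset.sum_const, nsmul_eq_mul, hcardY]
    rw [Finset.sum_congr rfl expand, Finset.sum_add_distrib, Finset.sum_sub_distrib,
      ← Finset.mul_sum, hmu_sum, hDmu, Finset.sum_const, hKcard, nsmul_eq_mul]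
    have hcomb : (∑ S ∈ (univ : Finset (Fin r)).powersetCard k,
          ∑ Y : Fin r → G, ((numSol k (plant Y S) : ℝ))^2)
        - 2*(expD1 G k r)*((Fintype.card G : ℝ)^r*(r.choose k : ℝ)*(expD1 G k r))
        + (r.choose k : ℝ)*((Fintype.card G : ℝ)^r*(expD1 G k r)^2)
        = (∑ S ∈ (univ : Finset (Fin r)).powersetCard k,
            ∑ Y : Fin r → G, ((numSol k (plant Y S) : ℝ))^2)
          - ((Fintype.card G : ℝ)^r*(r.choose k : ℝ))*(expD1 G k r)^2 := by ring
    rw [hcomb, sub_div, mul_div_cancel_left₀ ((expD1 G k r)^2)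
      (by positivity : (Fintype.card G : ℝ)^r*(r.choose k : ℝ) ≠ 0)]
  -- variance bound
  have hvarle : varD1 G k r
      ≤ (((r.choose k : ℝ)-1)
          + ((∑ t ∈ Finset.Icc 1 k,
              k.choose (2*t) * ((2*t).choose t) * ((r - 2*t).choose (k - t)) : ℕ) : ℝ))
        / (Fintype.card G : ℝ) := by
    rw [hvar, hmu]
    have hmono : (∑ S ∈ (univ : Finset (Fin r)).powersetCard k,
          ∑ Y : Fin r → G, ((numSol k (plant Y S) : ℝ))^2)
            / ((Fintype.card G : ℝ)^r * (r.choose k : ℝ))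
        ≤ ((Fintype.card G : ℝ)^r
            + (3*((r.choose k : ℝ)-1)
                + ((∑ t ∈ Finset.Icc 1 k,
                    k.choose (2*t) * ((2*t).choose t) * ((r - 2*t).choose (k - t)) : ℕ) : ℝ))
              * (Fintype.card G : ℝ)^(r-1)
            + ((r.choose k : ℝ)-1)^2 * (Fintype.card G : ℝ)^(r-2))
          / (Fintype.card G : ℝ)^r := by
      rw [div_le_div_iff₀ (by positivity) hQr]
      calc (∑ S ∈ (univ : Finset (Fin r)).powersetCard k,
            ∑ Y : Fin r → G, ((numSol k (plant Y S) : ℝ))^2) * (Fintype.card G : ℝ)^r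
          ≤ ((r.choose k : ℝ) * ((Fintype.card G : ℝ)^r
              + (3*((r.choose k : ℝ)-1)
                  + ((∑ t ∈ Finset.Icc 1 k,
                      k.choose (2*t) * ((2*t).choose t) * ((r - 2*t).choose (k - t)) : ℕ) : ℝ))
                * (Fintype.card G : ℝ)^(r-1)
              + ((r.choose k : ℝ)-1)^2 * (Fintype.card G : ℝ)^(r-2)))
              * (Fintype.card G : ℝ)^r :=
            mul_le_mul_of_nonneg_right hsq (le_of_lt hQr)
        _ = _ := by ring
    have hEq : ((Fintype.card G : ℝ)^r
            + (3*((r.choose k : ℝ)-1)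
                + ((∑ t ∈ Finset.Icc 1 k,
                    k.choose (2*t) * ((2*t).choose t) * ((r - 2*t).choose (k - t)) : ℕ) : ℝ))
              * (Fintype.card G : ℝ)^(r-1)
            + ((r.choose k : ℝ)-1)^2 * (Fintype.card G : ℝ)^(r-2))
          / (Fintype.card G : ℝ)^r
        - (1 + ((r.choose k : ℝ)-1)/(Fintype.card G : ℝ))^2
        = (((r.choose k : ℝ)-1)
            + ((∑ t ∈ Finset.Icc 1 k,
                k.choose (2*t) * ((2*t).choose t) * ((r - 2*t).choose (k - t)) : ℕ) : ℝ))
          / (Fintype.card G : ℝ) := by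
      rw [er1, er2, hr2]
      field_simp
      ring
    linarith [hmono, hEq]
  -- conclusion
  have hfin : (((r.choose k : ℝ)-1)
        + ((∑ t ∈ Finset.Icc 1 k,
            k.choose (2*t) * ((2*t).choose t) * ((r - 2*t).choose (k - t)) : ℕ) : ℝ))
      < (r.choose k : ℝ) * (1 + (2:ℝ)^k * (k:ℝ)^2 / (r:ℝ)) := by
    have h0 : (0:ℝ) ≤ (2:ℝ)^k * (k:ℝ)^2 / (r:ℝ) := by positivity
    nlinarith [hbadsum]
  calc varD1 G k r
      ≤ _ := hvarle
    _ < ((r.choose k : ℝ) * (1 + (2:ℝ)^k * (k:ℝ)^2 / (r:ℝ))) / (Fintype.card G : ℝ) := by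
        gcongr
    _ = ((r.choose k : ℝ) / (Fintype.card G : ℝ)) * (1 + (2:ℝ)^k * (k:ℝ)^2 / (r:ℝ)) := by
        ring
end

section
/- Let G be a finite abelian group, 1 ≤ k ≤ r, and ℓ ≥ 0. For every instance X ∈ G^r, the probability mass of the hybrid distribution satisfies D^ℓ({X}) = ( 1[c(X) ≤ ℓ] · (|G|/C(r,k)) · c(X) + Pr_{Y∼D1}[c(Y) > ℓ] ) · D0({X}). -/
open Finset

/-- The probability mass function of the uniform distribution `D0` on `G^r`. -/
noncomputable def D0pmf (G : Type) [Fintype G] (r : ℕ) (_X : Fin r → G) : ℝ :=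
  1 / (Fintype.card G : ℝ) ^ r

/-- `Pr_{Y∼D1}[c(Y) > ℓ]`: the probability under the planted distribution that
the number of solutions exceeds the real threshold `ℓ`. -/
noncomputable def D1probGt (G : Type) [AddCommGroup G] [Fintype G] [DecidableEq G]
    (k r : ℕ) (ℓ : ℝ) : ℝ :=
  ∑ X ∈ (univ : Finset (Fin r → G)).filter (fun X => ℓ < (numSol k X : ℝ)), D1pmf k X

/-- The probability mass function of the hybrid distribution `D^ℓ` on `G^r`:
draw `X` from `D1`; if `c(X) ≤ ℓ` output `X`, otherwise output an independent
uniform sample from `G^r`. -/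
noncomputable def Dhybpmf (G : Type) [AddCommGroup G] [Fintype G] [DecidableEq G]
    (k r : ℕ) (ℓ : ℝ) (X : Fin r → G) : ℝ :=
  (if (numSol k X : ℝ) ≤ ℓ then D1pmf k X else 0) + D1probGt G k r ℓ * D0pmf G r X

lemma plant_eq_iff {G : Type} [AddCommGroup G] {r : ℕ} {S : Finset (Fin r)}
    (hS : S.Nonempty) (Y X : Fin r → G) :
    plant Y S = X ↔ ((∑ i ∈ S, X i = 0) ∧ ∀ j, j ≠ S.min' hS → Y j = X j) := by
  classical
  constructor
  · intro h
    have hj : ∀ j, j ≠ S.min' hS → Y j = X j := by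
      intro j hj
      have := congrFun h j
      simpa [plant, hS, hj] using this
    refine ⟨?_, hj⟩
    have hm := congrFun h (S.min' hS)
    simp only [plant, dif_pos hS, if_pos rfl] at hm
    have herase : ∑ i ∈ S.erase (S.min' hS), Y i = ∑ i ∈ S.erase (S.min' hS), X i :=
      Finset.sum_congr rfl (fun i hi => hj i (Finset.ne_of_mem_erase hi))
    rw [← Finset.add_sum_erase S X (S.min'_mem hS), ← hm, herase]
    exact neg_add_cancel _
  · rintro ⟨h0, hj⟩
    funext j
    by_cases hjm : j = S.min' hS
    · subst hjm
      simp only [plant, dif_pos hS, if_pos rfl]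
      have herase : ∑ i ∈ S.erase (S.min' hS), Y i = ∑ i ∈ S.erase (S.min' hS), X i :=
        Finset.sum_congr rfl (fun i hi => hj i (Finset.ne_of_mem_erase hi))
      rw [herase]
      have hsum := Finset.add_sum_erase S X (S.min'_mem hS)
      rw [h0] at hsum
      exact neg_eq_of_add_eq_zero_left hsum
    · simp [plant, hS, hjm, hj j hjm]

lemma pair_count {G : Type} [AddCommGroup G] [Fintype G] [DecidableEq G] (k : ℕ) {r : ℕ}
    (hk : 1 ≤ k) (X : Fin r → G) :
    (((univ : Finset ((Fin r → G) × Finset (Fin r))).filter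
      (fun p => p.2.card = k ∧ plant p.1 p.2 = X)).card : ℕ)
    = Fintype.card G * numSol k X := by
  classical
  rw [numSol, ← Finset.card_univ (α := G), ← Finset.card_product]
  have hne : ∀ {S : Finset (Fin r)}, S.card = k → S.Nonempty := by
    intro S hS
    exact Finset.card_pos.mp (by omega)
  symm
  apply Finset.card_bij'
    (i := fun q hq => (Function.update X (q.2.min' (hne (by
      have := (Finset.mem_filter.mp (Finset.mem_product.mp hq).2).1
      rwa [Finset.mem_powersetCard_univ] at this))) q.1, q.2))
    (j := fun p hp => (p.1 (p.2.min' (hne (Finset.mem_filter.mp hp).2.1)), p.2))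
  case hi =>
    intro q hq
    have hq2 := (Finset.mem_product.mp hq).2
    obtain ⟨hmem, hsum⟩ := Finset.mem_filter.mp hq2
    have hcard : q.2.card = k := Finset.mem_powersetCard_univ.mp hmem
    have hS : q.2.Nonempty := hne hcard
    rw [Finset.mem_filter]
    refine ⟨Finset.mem_univ _, hcard, ?_⟩
    rw [plant_eq_iff hS]
    exact ⟨hsum, fun j hj => Function.update_of_ne hj _ _⟩
  case hj =>
    intro p hp
    obtain ⟨hcard, hplant⟩ := (Finset.mem_filter.mp hp).2
    have hS : p.2.Nonempty := hne hcard
    have h0 := ((plant_eq_iff hS p.1 X).mp hplant).1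
    rw [Finset.mem_product, Finset.mem_filter, Finset.mem_powersetCard_univ]
    exact ⟨Finset.mem_univ _, hcard, h0⟩
  case left_inv =>
    intro q hq
    have : Function.update X (q.2.min' (hne (by
        have := (Finset.mem_filter.mp (Finset.mem_product.mp hq).2).1
        rwa [Finset.mem_powersetCard_univ] at this))) q.1 (q.2.min' (hne (by
        have := (Finset.mem_filter.mp (Finset.mem_product.mp hq).2).1
        rwa [Finset.mem_powersetCard_univ] at this))) = q.1 := Function.update_self _ _ _
    exact Prod.ext_iff.mpr ⟨this, rfl⟩
  case right_inv =>
    intro p hp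
    obtain ⟨hcard, hplant⟩ := (Finset.mem_filter.mp hp).2
    have hS : p.2.Nonempty := hne hcard
    obtain ⟨-, hj⟩ := (plant_eq_iff hS p.1 X).mp hplant
    have h1 : Function.update X (p.2.min' hS) (p.1 (p.2.min' hS)) = p.1 := by
      funext j
      by_cases hjm : j = p.2.min' hS
      · subst hjm; simp
      · rw [Function.update_of_ne hjm, hj j hjm]
    exact Prod.ext_iff.mpr ⟨h1, rfl⟩

lemma D1pmf_eq {G : Type} [AddCommGroup G] [Fintype G] [DecidableEq G] (k : ℕ) {r : ℕ}
    (hk : 1 ≤ k) (hkr : k ≤ r) (X : Fin r → G) :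
    D1pmf k X = ((Fintype.card G : ℝ) / (r.choose k : ℝ)) * (numSol k X : ℝ) * D0pmf G r X := by
  rw [D1pmf, D0pmf, pair_count k hk X]
  have hG : (0 : ℝ) < (Fintype.card G : ℝ) := by positivity
  have hGr : ((Fintype.card G : ℝ)) ^ r ≠ 0 := by positivity
  have hc : (r.choose k : ℝ) ≠ 0 := by
    exact_mod_cast (Nat.choose_pos hkr).ne'
  push_cast
  field_simp

/-- **Explicit pmf of the hybrid distribution `D^ℓ`.**
For every instance `X ∈ G^r` and real `ℓ ≥ 0`,
`D^ℓ({X}) = ( 1[c(X) ≤ ℓ]·(|G|/C(r,k))·c(X) + Pr_{Y∼D1}[c(Y) > ℓ] )·D0({X})`. -/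
theorem Dhybpmf_explicit
    (G : Type) [AddCommGroup G] [Fintype G] [DecidableEq G]
    (k r : ℕ) (hk : 1 ≤ k) (hkr : k ≤ r) (ℓ : ℝ) (hℓ : 0 ≤ ℓ) (X : Fin r → G) :
    Dhybpmf G k r ℓ X
      = ((if (numSol k X : ℝ) ≤ ℓ then
            ((Fintype.card G : ℝ) / (r.choose k : ℝ)) * (numSol k X : ℝ)
          else 0)
          + D1probGt G k r ℓ) * D0pmf G r X := by
  rw [Dhybpmf, D1pmf_eq k hk hkr X]
  by_cases h : (numSol k X : ℝ) ≤ ℓ <;> simp [h] <;> ring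
end
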